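/- Let W⁰,…,W^{n-1} be finite-dimensional ℂ-vector spaces and let (f₀,…,f_{n-2}) and (f'₀,…,f'_{n-2}) be two tuples of linear maps f_i, f'_i : Wⁱ → W^{i+1} satisfying f_{i+1} ∘ f_i = 0 and f'_{i+1} ∘ f'_i = 0 for all 0 ≤ i ≤ n-3. Then there exist invertible linear maps g_i ∈ GL(Wⁱ) for 0 ≤ i ≤ n-1 with f'_i = g_{i+1} ∘ f_i ∘ g_i⁻¹ for all 0 ≤ i ≤ n-2 if and only if rank(f_i) = rank(f'_i) for all 0 ≤ i ≤ n-2. -/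

import Mathlib

open Module Submodule

lemma extend_equiv_top {V V' : Type*} [AddCommGroup V] [Module ℂ V] [FiniteDimensional ℂ V]
    [AddCommGroup V'] [Module ℂ V'] [FiniteDimensional ℂ V']
    (p : Submodule ℂ V) (p' : Submodule ℂ V') (e : p ≃ₗ[ℂ] p')
    (hV : finrank ℂ V = finrank ℂ V') :
    ∃ G : V ≃ₗ[ℂ] V', ∀ x : p, G x = e x := by
  obtain ⟨q, hq⟩ := Submodule.exists_isCompl p
  obtain ⟨q', hq'⟩ := Submodule.exists_isCompl p'
  have h1 := Submodule.finrank_add_eq_of_isCompl hq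
  have h2 := Submodule.finrank_add_eq_of_isCompl hq'
  have hp : finrank ℂ p = finrank ℂ p' := e.finrank_eq
  have hqq : finrank ℂ q = finrank ℂ q' := by omega
  let eq : q ≃ₗ[ℂ] q' := LinearEquiv.ofFinrankEq _ _ hqq
  refine ⟨((Submodule.prodEquivOfIsCompl p q hq).symm.trans (e.prodCongr eq)).trans
      (Submodule.prodEquivOfIsCompl p' q' hq'), fun x => ?_⟩
  simp [Submodule.prodEquivOfIsCompl_symm_apply_left]

lemma extend_equiv_chain {V V' : Type*} [AddCommGroup V] [Module ℂ V] [FiniteDimensional ℂ V]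
    [AddCommGroup V'] [Module ℂ V'] [FiniteDimensional ℂ V']
    (p k : Submodule ℂ V) (p' k' : Submodule ℂ V') (hpk : p ≤ k) (hpk' : p' ≤ k')
    (e : p ≃ₗ[ℂ] p') (hk : finrank ℂ k = finrank ℂ k')
    (hV : finrank ℂ V = finrank ℂ V') :
    ∃ G : V ≃ₗ[ℂ] V', (∀ x : p, G x = e x) ∧ k.map G.toLinearMap = k' := by
  set P : Submodule ℂ k := p.comap k.subtype with hP
  set P' : Submodule ℂ k' := p'.comap k'.subtype with hP'
  let e' : P ≃ₗ[ℂ] P' :=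
    ((Submodule.comapSubtypeEquivOfLe hpk).trans e).trans
      (Submodule.comapSubtypeEquivOfLe hpk').symm
  obtain ⟨Gk, hGk⟩ := extend_equiv_top P P' e' hk
  obtain ⟨G, hG⟩ := extend_equiv_top k k' (Gk) hV
  refine ⟨G, fun x => ?_, ?_⟩
  · have hx : (⟨(x : V), hpk x.2⟩ : k) ∈ P := by simpa only [hP, Submodule.mem_comap, Submodule.subtype_apply] using x.2
    have h1 := hG ⟨(x : V), hpk x.2⟩
    have h2 := hGk ⟨⟨(x : V), hpk x.2⟩, hx⟩
    -- G x = Gk ⟨x⟩ = e' ⟨x⟩ = e x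
    rw [show ((x : V)) = ((⟨(x : V), hpk x.2⟩ : k) : V) from rfl, h1, h2]
    simp [e', Submodule.comapSubtypeEquivOfLe]
  · have hle : k.map G.toLinearMap ≤ k' := by
      rintro _ ⟨y, hy, rfl⟩
      rw [show (G.toLinearMap y) = G y from rfl, hG ⟨y, hy⟩]
      exact (Gk ⟨y, hy⟩).2
    refine Submodule.eq_of_le_of_finrank_eq hle ?_
    rw [LinearEquiv.finrank_map_eq]; exact hk

lemma step_equiv {V U : Type*} [AddCommGroup V] [Module ℂ V] [FiniteDimensional ℂ V]
    [AddCommGroup U] [Module ℂ U] [FiniteDimensional ℂ U]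
    (a a' : V →ₗ[ℂ] U) (g : V ≃ₗ[ℂ] V)
    (hker : (LinearMap.ker a).map g.toLinearMap = LinearMap.ker a')
    (k k' : Submodule ℂ U) (hk : LinearMap.range a ≤ k) (hk' : LinearMap.range a' ≤ k')
    (hfk : finrank ℂ k = finrank ℂ k') :
    ∃ G : U ≃ₗ[ℂ] U, (∀ x : V, G (a x) = a' (g x)) ∧ k.map G.toLinearMap = k' := by
  set φ : V →ₗ[ℂ] U := a'.comp g.toLinearMap with hφ
  have hkφ : LinearMap.ker a = LinearMap.ker φ := by
    rw [hφ, LinearMap.ker_comp, ← hker]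
    exact (Submodule.comap_map_eq_of_injective g.injective _).symm
  have hrφ : LinearMap.range φ = LinearMap.range a' := by
    rw [hφ, LinearMap.range_comp, LinearEquiv.range, Submodule.map_top]
  let e : (LinearMap.range a : Submodule ℂ U) ≃ₗ[ℂ] LinearMap.range a' :=
    ((a.quotKerEquivRange.symm.trans
      (Submodule.quotEquivOfEq _ _ hkφ)).trans φ.quotKerEquivRange).trans
      (LinearEquiv.ofEq _ _ hrφ)
  have he : ∀ x : V, (e ⟨a x, LinearMap.mem_range_self a x⟩ : U) = a' (g x) := by
    intro x
    have h1 : a.quotKerEquivRange.symm ⟨a x, LinearMap.mem_range_self a x⟩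
        = Submodule.Quotient.mk x := by
      rw [LinearEquiv.symm_apply_eq]
      exact Subtype.ext (LinearMap.quotKerEquivRange_apply_mk a x).symm
    simp only [e, LinearEquiv.trans_apply, h1, Submodule.quotEquivOfEq_mk,
      LinearMap.quotKerEquivRange_apply_mk, LinearEquiv.coe_ofEq_apply]
    rfl
  obtain ⟨G, hG1, hG2⟩ := extend_equiv_chain (LinearMap.range a) k
    (LinearMap.range a') k' hk hk' e hfk rfl
  refine ⟨G, fun x => ?_, hG2⟩
  rw [show a x = (⟨a x, LinearMap.mem_range_self a x⟩ : LinearMap.range a) from rfl,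
    hG1, he]

/-- Two complexes `(f₀,…,f_{n-2})` and `(f'₀,…,f'_{n-2})` of linear maps between
finite-dimensional complex vector spaces `W⁰,…,W^{n-1}` are conjugate under
`GL(W⁰) × ⋯ × GL(W^{n-1})` (acting by change of basis, `f'_i = g_{i+1} ∘ f_i ∘ g_i⁻¹`)
iff `rank f_i = rank f'_i` for all `0 ≤ i ≤ n-2`. -/
theorem complexes_conjugate_iff_ranks_eq (n : ℕ)
    (W : ℕ → Type*) [∀ i, AddCommGroup (W i)] [∀ i, Module ℂ (W i)]
    [∀ i, FiniteDimensional ℂ (W i)]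
    (f f' : ∀ i : ℕ, W i →ₗ[ℂ] W (i + 1))
    (hcomplex : ∀ i, i + 3 ≤ n → (f (i + 1)).comp (f i) = 0)
    (hcomplex' : ∀ i, i + 3 ≤ n → (f' (i + 1)).comp (f' i) = 0) :
    (∃ g : ∀ i : ℕ, W i ≃ₗ[ℂ] W i, ∀ i, i + 2 ≤ n →
        f' i = ((g (i + 1)).toLinearMap.comp ((f i).comp (g i).symm.toLinearMap))) ↔
      (∀ i, i + 2 ≤ n →
        Module.finrank ℂ (LinearMap.range (f i)) =
          Module.finrank ℂ (LinearMap.range (f' i))) := by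
  constructor
  · rintro ⟨g, hg⟩ i hi
    rw [hg i hi, LinearMap.range_comp, LinearEquiv.finrank_map_eq,
      LinearMap.range_comp, LinearEquiv.range, Submodule.map_top]
  · intro hrank
    have key : ∀ m, ∃ g : ∀ i : ℕ, W i ≃ₗ[ℂ] W i,
        (∀ i, i + 2 ≤ n → i < m →
          f' i = ((g (i + 1)).toLinearMap.comp ((f i).comp (g i).symm.toLinearMap))) ∧
        (m + 2 ≤ n →
          (LinearMap.ker (f m)).map (g m).toLinearMap = LinearMap.ker (f' m)) := by
      intro m
      induction m with
      | zero =>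
        by_cases h2 : 2 ≤ n
        · have hr := hrank 0 h2
          have e1 := LinearMap.finrank_range_add_finrank_ker (f 0)
          have e2 := LinearMap.finrank_range_add_finrank_ker (f' 0)
          have hfk : finrank ℂ (LinearMap.ker (f 0)) =
              finrank ℂ (LinearMap.ker (f' 0)) := by omega
          obtain ⟨G, _, hG2⟩ := extend_equiv_chain (⊥ : Submodule ℂ (W 0))
            (LinearMap.ker (f 0)) (⊥ : Submodule ℂ (W 0)) (LinearMap.ker (f' 0))
            bot_le bot_le (LinearEquiv.ofFinrankEq _ _ (by simp)) hfk rfl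
          exact ⟨Function.update (fun i => LinearEquiv.refl ℂ (W i)) 0 G,
            fun i _ hi => absurd hi (Nat.not_lt_zero i),
            fun _ => by simpa using hG2⟩
        · exact ⟨fun i => LinearEquiv.refl ℂ (W i),
            fun i _ hi => absurd hi (Nat.not_lt_zero i), fun h => absurd h h2⟩
      | succ m ih =>
        obtain ⟨g, h1, h2⟩ := ih
        by_cases hm : m + 2 ≤ n
        · -- build k, k'
          have hker := h2 hm
          obtain ⟨k, k', hk, hk', hfk, hkprop⟩ :
              ∃ (k k' : Submodule ℂ (W (m + 1))),
                LinearMap.range (f m) ≤ k ∧ LinearMap.range (f' m) ≤ k' ∧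
                finrank ℂ k = finrank ℂ k' ∧
                (m + 3 ≤ n → k = LinearMap.ker (f (m + 1)) ∧
                  k' = LinearMap.ker (f' (m + 1))) := by
            by_cases hm3 : m + 3 ≤ n
            · refine ⟨LinearMap.ker (f (m + 1)), LinearMap.ker (f' (m + 1)),
                LinearMap.range_le_ker_iff.mpr (hcomplex m hm3),
                LinearMap.range_le_ker_iff.mpr (hcomplex' m hm3), ?_,
                fun _ => ⟨rfl, rfl⟩⟩
              have hr := hrank (m + 1) (by omega)
              have e1 := LinearMap.finrank_range_add_finrank_ker (f (m + 1))
              have e2 := LinearMap.finrank_range_add_finrank_ker (f' (m + 1))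
              omega
            · exact ⟨⊤, ⊤, le_top, le_top, rfl, fun h => absurd h hm3⟩
          obtain ⟨G, hG1, hG2⟩ := step_equiv (f m) (f' m) (g m) hker k k' hk hk' hfk
          refine ⟨Function.update g (m + 1) G, ?_, ?_⟩
          · intro i hi hilt
            rcases Nat.lt_succ_iff_lt_or_eq.mp hilt with hilt | rfl
            · rw [Function.update_of_ne (by omega), Function.update_of_ne (by omega)]
              exact h1 i hi hilt
            · rw [Function.update_self, Function.update_of_ne (by omega)]
              ext y
              simp only [LinearMap.comp_apply, LinearEquiv.coe_coe]
              rw [hG1 ((g i).symm y), LinearEquiv.apply_symm_apply]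
          · intro hm3
            rw [Function.update_self]
            obtain ⟨hkk, hkk'⟩ := hkprop (by omega)
            rw [← hkk, ← hkk']
            exact hG2
        · refine ⟨g, fun i hi hilt => ?_, fun h => absurd (by omega : m + 2 ≤ n) hm⟩
          rcases Nat.lt_succ_iff_lt_or_eq.mp hilt with hilt | rfl
          · exact h1 i hi hilt
          · exact absurd hi hm
    obtain ⟨g, h1, _⟩ := key n
    exact ⟨g, fun i hi => h1 i hi (by omega)⟩
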